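/- For any n ≥ 1 and s ≥ 0, an interval [(P, w^1,...,w^s), (P'', w''^1,...,w''^s)] in the poset Π_{n,s+1} with (P,w^1,...,w^s) ≠ 0̂ is order-isomorphic to the interval [P, P''] in the partition lattice Π_n, via the map sending (P', w'^1,...,w'^s) to P'. -/
import Mathlib


open Finset

/-- A vector partition of `[n]` into `s+1` components: a partition `P` of `[n]`
together with `s` labelings of its parts. -/
structure VPart (n s : ℕ) where
  P : Finpartition (Finset.univ : Finset (Fin n))
  w : Fin s → Finset (Fin n) → Finset (Fin n)
  card_w : ∀ i : Fin s, ∀ B ∈ P.parts, (w i B).card = B.card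
  part_w : ∀ i : Fin s, ∀ x : Fin n, ∃! B, B ∈ P.parts ∧ x ∈ w i B
  w_junk : ∀ i B, B ∉ P.parts → w i B = ∅

namespace VPart

variable {n s : ℕ}

@[ext] theorem ext' {x y : VPart n s} (hP : x.P = y.P) (hw : x.w = y.w) : x = y := by
  cases x; cases y; simp_all

/-- componentwise union-refinement order -/
instance : PartialOrder (VPart n s) where
  le x y := x.P ≤ y.P ∧
    ∀ i : Fin s, ∀ B ∈ x.P.parts, ∀ B' ∈ y.P.parts, B ⊆ B' → x.w i B ⊆ y.w i B'
  le_refl x := by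
    refine ⟨le_refl _, fun i B hB B' hB' hBB' => ?_⟩
    obtain rfl : B = B' := by
      obtain ⟨a, ha⟩ := x.P.nonempty_of_mem_parts hB
      exact x.P.eq_of_mem_parts hB hB' ha (hBB' ha)
    exact subset_rfl
  le_trans x y z hxy hyz := by
    refine ⟨le_trans hxy.1 hyz.1, fun i B hB B'' hB'' hBB'' => ?_⟩
    obtain ⟨B', hB', hBB'⟩ := hxy.1 hB
    obtain ⟨B''', hB''', hB'B'''⟩ := hyz.1 hB'
    obtain ⟨a, ha⟩ := x.P.nonempty_of_mem_parts hB
    obtain rfl : B''' = B'' :=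
      z.P.eq_of_mem_parts hB''' hB'' (hB'B''' (hBB' ha)) (hBB'' ha)
    exact subset_trans (hxy.2 i B hB B' hB' hBB') (hyz.2 i B' hB' B''' hB''' hB'B''')
  le_antisymm x y hxy hyx := by
    have hP : x.P = y.P := le_antisymm hxy.1 hyx.1
    refine ext' hP ?_
    funext i B
    by_cases hB : B ∈ x.P.parts
    · exact subset_antisymm (hxy.2 i B hB B (hP ▸ hB) subset_rfl)
        (hyx.2 i B (hP ▸ hB) B hB subset_rfl)
    · rw [x.w_junk i B hB, y.w_junk i B (hP ▸ hB)]

/-- the part of the underlying partition containing `k` -/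
def partOf (x : VPart n s) (k : Fin n) : Finset (Fin n) := x.P.part k

/-- the atom word of `x`: `atomWord x i k` is the element of the `i`-th label of the
part containing `k` whose rank in that label matches the rank of `k` in its part. -/
def atomWord (x : VPart n s) (i : Fin s) (k : Fin n) : Fin n :=
  (((x.w i (x.partOf k)).sort (· ≤ ·)).getD (((x.partOf k).filter (· < k)).card)) k

/-- `x` is an atom: all parts of the underlying partition are singletons. -/
def IsAtomic (x : VPart n s) : Prop := ∀ B ∈ x.P.parts, B.card = 1

/-- strict lexicographic order on atom words, with `i` as the major index
and `k` the minor index. -/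
def wordLt (A B : Fin s → Fin n → Fin n) : Prop :=
  ∃ i k, A i k < B i k ∧
    ∀ i' k', (i' < i ∨ (i' = i ∧ k' < k)) → A i' k' = B i' k'

def wordLe (A B : Fin s → Fin n → Fin n) : Prop := wordLt A B ∨ A = B

end VPart

namespace VPart

variable {n s : ℕ}

lemma w_disjoint (x : VPart n s) (i : Fin s) {C C' : Finset (Fin n)}
    (hC : C ∈ x.P.parts) (hC' : C' ∈ x.P.parts) (hne : C ≠ C') :
    Disjoint (x.w i C) (x.w i C') := by
  rw [Finset.disjoint_left]
  intro a haC haC'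
  obtain ⟨B, -, hu⟩ := x.part_w i a
  exact hne ((hu C ⟨hC, haC⟩).trans (hu C' ⟨hC', haC'⟩).symm)

lemma part_eq_biUnion {x : VPart n s} {Q : Finpartition (Finset.univ : Finset (Fin n))}
    (hQ : x.P ≤ Q) {B : Finset (Fin n)} (hB : B ∈ Q.parts) :
    B = (x.P.parts.filter (· ⊆ B)).biUnion id := by
  ext a
  simp only [Finset.mem_biUnion, Finset.mem_filter, id]
  constructor
  · intro ha
    obtain ⟨C, hC, haC⟩ := x.P.exists_mem (Finset.mem_univ a)
    obtain ⟨B', hB', hCB'⟩ := hQ hC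
    obtain rfl : B' = B := Q.eq_of_mem_parts hB' hB (hCB' haC) ha
    exact ⟨C, ⟨hC, hCB'⟩, haC⟩
  · rintro ⟨C, ⟨hC, hCB⟩, haC⟩
    exact hCB haC

/-- Lift a coarser partition `Q` to a vector partition above `x`, with labels obtained
by taking unions of the labels of `x`. -/
def lift (x : VPart n s) (Q : Finpartition (Finset.univ : Finset (Fin n)))
    (hQ : x.P ≤ Q) : VPart n s where
  P := Q
  w i B := if B ∈ Q.parts then (x.P.parts.filter (· ⊆ B)).biUnion (x.w i) else ∅
  card_w i B hB := by
    beta_reduce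
    rw [if_pos hB, Finset.card_biUnion (fun C hC C' hC' hne =>
      x.w_disjoint i (Finset.mem_filter.1 hC).1 (Finset.mem_filter.1 hC').1 hne)]
    conv_rhs => rw [part_eq_biUnion hQ hB]
    rw [Finset.card_biUnion (fun C hC C' hC' hne =>
      x.P.disjoint (Finset.mem_coe.2 (Finset.mem_filter.1 hC).1)
        (Finset.mem_coe.2 (Finset.mem_filter.1 hC').1) hne)]
    exact Finset.sum_congr rfl fun C hC => x.card_w i C (Finset.mem_filter.1 hC).1
  part_w i a := by
    obtain ⟨C, ⟨hC, haC⟩, hu⟩ := x.part_w i a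
    obtain ⟨B, hB, hCB⟩ := hQ hC
    refine ⟨B, ⟨hB, ?_⟩, ?_⟩
    · beta_reduce
      rw [if_pos hB]
      exact Finset.mem_biUnion.2 ⟨C, Finset.mem_filter.2 ⟨hC, hCB⟩, haC⟩
    · rintro B' ⟨hB', haB'⟩
      beta_reduce at haB'
      rw [if_pos hB'] at haB'
      obtain ⟨C', hC', haC'⟩ := Finset.mem_biUnion.1 haB'
      obtain ⟨hC'p, hC'B'⟩ := Finset.mem_filter.1 hC'
      obtain rfl : C' = C := hu C' ⟨hC'p, haC'⟩
      obtain ⟨b, hb⟩ := x.P.nonempty_of_mem_parts hC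
      exact Q.eq_of_mem_parts hB' hB (hC'B' hb) (hCB hb)
  w_junk i B hB := if_neg hB

@[simp] lemma lift_P (x : VPart n s) (Q) (hQ : x.P ≤ Q) : (lift x Q hQ).P = Q := rfl

lemma lift_w (x : VPart n s) (Q) (hQ : x.P ≤ Q) (i : Fin s) (B : Finset (Fin n)) :
    (lift x Q hQ).w i B =
      if B ∈ Q.parts then (x.P.parts.filter (· ⊆ B)).biUnion (x.w i) else ∅ := rfl

lemma le_lift (x : VPart n s) (Q) (hQ : x.P ≤ Q) : x ≤ lift x Q hQ := by
  refine ⟨hQ, fun i B hB B' hB' hBB' => ?_⟩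
  have hB'' : B' ∈ Q.parts := hB'
  rw [lift_w, if_pos hB'']
  exact Finset.subset_biUnion_of_mem (x.w i) (Finset.mem_filter.2 ⟨hB, hBB'⟩)

lemma eq_lift {x z : VPart n s} (hxz : x ≤ z) : z = lift x z.P hxz.1 := by
  refine ext' rfl ?_
  funext i B
  by_cases hB : B ∈ z.P.parts
  · have hsub : (x.P.parts.filter (· ⊆ B)).biUnion (x.w i) ⊆ z.w i B :=
      Finset.biUnion_subset.2 fun C hC =>
        hxz.2 i C (Finset.mem_filter.1 hC).1 B hB (Finset.mem_filter.1 hC).2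
    have hcard : (z.w i B).card ≤ ((x.P.parts.filter (· ⊆ B)).biUnion (x.w i)).card := by
      have h1 := (lift x z.P hxz.1).card_w i B hB
      rw [lift_w, if_pos hB] at h1
      rw [z.card_w i B hB, h1]
    rw [lift_w, if_pos hB]
    exact (Finset.eq_of_subset_of_card_le hsub hcard).symm
  · rw [z.w_junk i B hB, lift_w, if_neg hB]

lemma lift_mono (x : VPart n s) {Q Q'} (hQ : x.P ≤ Q) (hQ' : x.P ≤ Q') (h : Q ≤ Q') :
    lift x Q hQ ≤ lift x Q' hQ' := by
  refine ⟨h, fun i B hB B' hB' hBB' => ?_⟩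
  have hB2 : B ∈ Q.parts := hB
  have hB2' : B' ∈ Q'.parts := hB'
  rw [lift_w, lift_w, if_pos hB2, if_pos hB2']
  refine Finset.biUnion_subset_biUnion_of_subset_left _ ?_
  intro C hC
  obtain ⟨h1, h2⟩ := Finset.mem_filter.1 hC
  exact Finset.mem_filter.2 ⟨h1, h2.trans hBB'⟩

lemma le_iff_P_le {x z z' : VPart n s} (hxz : x ≤ z) (hxz' : x ≤ z') :
    z ≤ z' ↔ z.P ≤ z'.P := by
  refine ⟨fun h => h.1, fun h => ?_⟩
  have h2 := lift_mono x hxz.1 hxz'.1 h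
  rw [← eq_lift hxz, ← eq_lift hxz'] at h2
  exact h2

end VPart

open VPart in
/-- any interval `[x, y]` of `Π_{n,s+1}` with `x ≠ ̄0` is order
isomorphic to the interval `[x.P, y.P]` of the partition lattice `Π_n`, via the map
sending a vector partition to its underlying partition. -/
theorem statement1 (n s : ℕ) (x y : VPart n s) (hxy : x ≤ y) :
    ∃ e : Set.Icc (x : WithBot (VPart n s)) (y : WithBot (VPart n s)) ≃o
        Set.Icc x.P y.P,
      ∀ (z : Set.Icc (x : WithBot (VPart n s)) (y : WithBot (VPart n s)))
        (v : VPart n s), (z : WithBot (VPart n s)) = v ->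
          (e z : Finpartition (Finset.univ : Finset (Fin n))) = v.P := by
  classical
  have hcoe : ∀ z : Set.Icc (x : WithBot (VPart n s)) (y : WithBot (VPart n s)),
      ∃ v : VPart n s, (z : WithBot (VPart n s)) = ↑v ∧ x ≤ v ∧ v ≤ y := by
    rintro ⟨z, hz1, hz2⟩
    induction z using WithBot.recBotCoe with
    | bot => exact absurd (le_bot_iff.1 hz1) (WithBot.coe_ne_bot)
    | coe v => exact ⟨v, rfl, WithBot.coe_le_coe.1 hz1, WithBot.coe_le_coe.1 hz2⟩
  let f : Set.Icc (x : WithBot (VPart n s)) (y : WithBot (VPart n s)) → Set.Icc x.P y.P :=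
    fun z => ⟨((hcoe z).choose).P, (hcoe z).choose_spec.2.1.1, (hcoe z).choose_spec.2.2.1⟩
  let g : Set.Icc x.P y.P → Set.Icc (x : WithBot (VPart n s)) (y : WithBot (VPart n s)) :=
    fun Q => ⟨↑(lift x Q.1 Q.2.1), WithBot.coe_le_coe.2 (le_lift x Q.1 Q.2.1),
      WithBot.coe_le_coe.2
        (le_of_le_of_eq (lift_mono x Q.2.1 hxy.1 Q.2.2) (eq_lift hxy).symm)⟩
  have key : ∀ z, (g (f z) : WithBot (VPart n s)) = (z : WithBot (VPart n s)) := by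
    intro z
    obtain ⟨hz1, hz2, hz3⟩ := (hcoe z).choose_spec
    exact ((congrArg (fun t : VPart n s => (t : WithBot (VPart n s)))
      (eq_lift hz2)).symm.trans hz1.symm)
  refine ⟨⟨⟨f, g, fun z => Subtype.ext (key z), ?_⟩, ?_⟩, ?_⟩
  · intro Q
    apply Subtype.ext
    have h1 := (hcoe (g Q)).choose_spec.1
    have h2 : (g Q : WithBot (VPart n s)) = ↑(lift x Q.1 Q.2.1) := rfl
    have h3 := WithBot.coe_injective (h2.symm.trans h1)
    show ((hcoe (g Q)).choose).P = Q.1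
    rw [← h3]
    rfl
  · intro z z'
    obtain ⟨hz1, hz2, hz3⟩ := (hcoe z).choose_spec
    obtain ⟨hz1', hz2', hz3'⟩ := (hcoe z').choose_spec
    show ((hcoe z).choose).P ≤ ((hcoe z').choose).P ↔ z ≤ z'
    rw [← le_iff_P_le hz2 hz2']
    constructor
    · intro h
      show (z : WithBot (VPart n s)) ≤ (z' : WithBot (VPart n s))
      rw [hz1, hz1']
      exact WithBot.coe_le_coe.2 h
    · intro h
      have : (z : WithBot (VPart n s)) ≤ (z' : WithBot (VPart n s)) := h
      rw [hz1, hz1'] at this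
      exact WithBot.coe_le_coe.1 this
  · intro z v hv
    have h1 := (hcoe z).choose_spec.1
    have h3 := WithBot.coe_injective (h1.symm.trans hv)
    show ((hcoe z).choose).P = v.P
    rw [h3]
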